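/- There exist δ0 > 0 and n0 ∈ ℕ such that the following holds for all 0 < δ ≤ δ0 and n ≥ n0. Assume the Setup. Then for every vertex v ∈ V', min{ |N_G(v) ∩ D1|, |N_G(v) ∩ D2| } ≤ √(3δ)·n. -/

import Mathlib

open SimpleGraph

/-- The number of triangles (copies of `K₃`) in a graph `G`, i.e. `N(K₃, G)`. -/
noncomputable def triangleCount {V : Type*} (G : SimpleGraph V) : ℕ :=
  Set.ncard {s : Finset V | G.IsNClique 3 s}

/-- `G` contains a subgraph isomorphic to `H`. -/
def Contains {W V : Type*} (H : SimpleGraph W) (G : SimpleGraph V) : Prop :=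
  ∃ f : H →g G, Function.Injective f

/-- `G` is `H`-free: it contains no subgraph isomorphic to `H`. -/
def Free {W V : Type*} (H : SimpleGraph W) (G : SimpleGraph V) : Prop :=
  ¬ Contains H G

/-- The expansion `F^△` of a graph `F`: each edge `uv` of `F` is replaced by a triangle
`u v w_{uv}` where the new vertices `w_{uv}` are pairwise distinct and outside `V(F)`. -/
def expansion {V : Type*} (F : SimpleGraph V) : SimpleGraph (V ⊕ F.edgeSet) :=
  SimpleGraph.fromRel (fun a b =>
    (∃ u v, a = Sum.inl u ∧ b = Sum.inl v ∧ F.Adj u v) ∨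
    (∃ u, ∃ e : F.edgeSet, a = Sum.inl u ∧ b = Sum.inr e ∧ u ∈ (e : Sym2 V)))

/-- `C₄^△`, the expansion of the 4-edge cycle: a graph on 8 vertices. -/
def C4expansion : SimpleGraph ((Fin 4) ⊕ (SimpleGraph.cycleGraph 4).edgeSet) :=
  expansion (SimpleGraph.cycleGraph 4)

/-- The generalized Turán number `ex(n, K₃, H)`: the maximum number of triangles in an
`H`-free graph on `n` vertices. -/
noncomputable def exTriangles (n : ℕ) {W : Type*} (H : SimpleGraph W) : ℕ :=
  sSup {k | ∃ G : SimpleGraph (Fin n), _root_.Free H G ∧ triangleCount G = k}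

/-- `T(n)`: the complete bipartite graph on `Fin n` with parts
`X = {v : v < ⌊n/2⌋}` (of size `⌊n/2⌋`) and `Y = {v : v ≥ ⌊n/2⌋}` (of size `⌈n/2⌉`). -/
def Tgraph (n : ℕ) : SimpleGraph (Fin n) :=
  SimpleGraph.fromRel (fun u v => u.val < n / 2 ∧ n / 2 ≤ v.val)

/-- `T⁺(n)`: the graph `T(n)` with one extra edge (between vertices `0` and `1`) added
inside the part `X`. -/
def TgraphPlus (n : ℕ) : SimpleGraph (Fin n) :=
  SimpleGraph.fromRel (fun u v =>
    (u.val < n / 2 ∧ n / 2 ≤ v.val) ∨ (u.val = 0 ∧ v.val = 1))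

/-- `T⁼(n)`: the graph obtained from `T(n)` by adding the edge `e₁ = {0,1}` inside `X`,
adding the edge `e₂ = {⌊n/2⌋, ⌊n/2⌋+1}` inside `Y`, and deleting the perfect matching
`{0,⌊n/2⌋}, {1,⌊n/2⌋+1}` between the endpoints of `e₁` and of `e₂`. -/
def TgraphEq (n : ℕ) : SimpleGraph (Fin n) :=
  SimpleGraph.fromRel (fun u v =>
    (u.val < n / 2 ∧ n / 2 ≤ v.val ∧
      ¬(u.val = 0 ∧ v.val = n / 2) ∧ ¬(u.val = 1 ∧ v.val = n / 2 + 1))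
    ∨ (u.val = 0 ∧ v.val = 1) ∨ (u.val = n / 2 ∧ v.val = n / 2 + 1))

/-- The join `K₁ ⋈ H` of a single new vertex with the graph `H`. -/
def joinK1 {V : Type*} (H : SimpleGraph V) : SimpleGraph (Option V) :=
  SimpleGraph.fromRel (fun u v =>
    u = none ∨ ∃ a b, u = some a ∧ v = some b ∧ H.Adj a b)

/-- `S(n) = K₁ ⋈ T(n-1)`. -/
def Sgraph (n : ℕ) : SimpleGraph (Option (Fin (n - 1))) := joinK1 (Tgraph (n - 1))

/-- `S⁺(n) = K₁ ⋈ T⁺(n-1)`. -/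
def SgraphPlus (n : ℕ) : SimpleGraph (Option (Fin (n - 1))) := joinK1 (TgraphPlus (n - 1))

/-- `S⁼(n) = K₁ ⋈ T⁼(n-1)`. -/
def SgraphEq (n : ℕ) : SimpleGraph (Option (Fin (n - 1))) := joinK1 (TgraphEq (n - 1))

/-- `d_G(uv)`: the number of triangles of `G` containing the edge `uv`, i.e. the number of
common neighbors of `u` and `v`. -/
noncomputable def edgeTriangleDeg {V : Type*} (G : SimpleGraph V) (u v : V) : ℕ :=
  {w : V | G.Adj u w ∧ G.Adj v w}.ncard

/-- `e_G(A, B)`: the number of edges of `G` with one endpoint in `A` and the other in `B`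
(for disjoint `A`, `B`). -/
noncomputable def crossEdges {V : Type*} (G : SimpleGraph V) (A B : Set V) : ℕ :=
  {p : V × V | p.1 ∈ A ∧ p.2 ∈ B ∧ G.Adj p.1 p.2}.ncard

variable {α' : Type*} {v0 v1 v2 v3 : α'}
def cmap (v0 v1 v2 v3 : α') (i : Fin 4) : α' :=
  if i = 0 then v0 else if i = 1 then v1 else if i = 2 then v2 else v3
lemma cmap0 : cmap v0 v1 v2 v3 0 = v0 := rfl
lemma cmap1 : cmap v0 v1 v2 v3 1 = v1 := rfl
lemma cmap2 : cmap v0 v1 v2 v3 2 = v2 := rfl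
lemma cmap3 : cmap v0 v1 v2 v3 3 = v3 := rfl
lemma cmap_inj (n01 : v0 ≠ v1) (n02 : v0 ≠ v2) (n03 : v0 ≠ v3) (n12 : v1 ≠ v2)
    (n13 : v1 ≠ v3) (n23 : v2 ≠ v3) : Function.Injective (cmap v0 v1 v2 v3) := by
  intro u w h
  fin_cases u <;> fin_cases w <;> simp_all [cmap]

def gmap (a01 a12 a23 a30 : α') (e : Sym2 (Fin 4)) : α' :=
  if e = s(0,1) then a01 else if e = s(1,2) then a12 else if e = s(2,3) then a23 else a30
variable {a01 a12 a23 a30 : α'}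
lemma gmap01 : gmap a01 a12 a23 a30 s(0,1) = a01 := by rw [gmap, if_pos rfl]
lemma gmap12 : gmap a01 a12 a23 a30 s(1,2) = a12 := by
  rw [gmap, if_neg (by decide), if_pos rfl]
lemma gmap23 : gmap a01 a12 a23 a30 s(2,3) = a23 := by
  rw [gmap, if_neg (by decide), if_neg (by decide), if_pos rfl]
lemma gmap30 : gmap a01 a12 a23 a30 s(3,0) = a30 := by
  rw [gmap, if_neg (by decide), if_neg (by decide), if_neg (by decide)]

lemma c4edge' (E : Sym2 (Fin 4)) (h : E ∈ (cycleGraph 4).edgeSet) :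
    E = s(0,1) ∨ E = s(1,2) ∨ E = s(2,3) ∨ E = s(3,0) := by
  induction E using Sym2.ind with
  | _ i j =>
    revert h
    show (cycleGraph 4).Adj i j → _
    revert i j; decide

lemma adj_cases (i j : Fin 4) (h : (cycleGraph 4).Adj i j) :
    (i=0∧j=1)∨(i=1∧j=0)∨(i=1∧j=2)∨(i=2∧j=1)∨(i=2∧j=3)∨(i=3∧j=2)∨(i=3∧j=0)∨(i=0∧j=3) := by
  revert h; revert i j; decide

lemma fin4_cases (u : Fin 4) : u = 0 ∨ u = 1 ∨ u = 2 ∨ u = 3 := by omega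

lemma contains_config {n : ℕ} {G : SimpleGraph (Fin n)} {v0 v1 v2 v3 b01 b12 b23 b30 : Fin n}
    (h01 : G.Adj v0 v1) (h12 : G.Adj v1 v2) (h23 : G.Adj v2 v3) (h30 : G.Adj v3 v0)
    (hA01 : G.Adj v0 b01) (hB01 : G.Adj v1 b01)
    (hA12 : G.Adj v1 b12) (hB12 : G.Adj v2 b12)
    (hA23 : G.Adj v2 b23) (hB23 : G.Adj v3 b23)
    (hA30 : G.Adj v3 b30) (hB30 : G.Adj v0 b30)
    (n02 : v0 ≠ v2) (n13 : v1 ≠ v3)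
    (m00 : v0 ≠ b01) (m01 : v0 ≠ b12) (m02 : v0 ≠ b23) (m03 : v0 ≠ b30)
    (m10 : v1 ≠ b01) (m11 : v1 ≠ b12) (m12 : v1 ≠ b23) (m13 : v1 ≠ b30)
    (m20 : v2 ≠ b01) (m21 : v2 ≠ b12) (m22 : v2 ≠ b23) (m23 : v2 ≠ b30)
    (m30 : v3 ≠ b01) (m31 : v3 ≠ b12) (m32 : v3 ≠ b23) (m33 : v3 ≠ b30)
    (p01 : b01 ≠ b12) (p02 : b01 ≠ b23) (p03 : b01 ≠ b30)
    (p12 : b12 ≠ b23) (p13 : b12 ≠ b30) (p23 : b23 ≠ b30) :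
    Contains C4expansion G := by
  have n01 : v0 ≠ v1 := h01.ne
  have n03 : v0 ≠ v3 := h30.ne'
  have n12' : v1 ≠ v2 := h12.ne
  have n23' : v2 ≠ v3 := h23.ne
  have hmap : ∀ a b, C4expansion.Adj a b →
      G.Adj (Sum.elim (cmap v0 v1 v2 v3) (fun e => gmap b01 b12 b23 b30 e.1) a)
        (Sum.elim (cmap v0 v1 v2 v3) (fun e => gmap b01 b12 b23 b30 e.1) b) := by
    intro a b hab
    rw [C4expansion, expansion, fromRel_adj] at hab
    have key : ∀ a b : (Fin 4) ⊕ (cycleGraph 4).edgeSet,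
        ((∃ u v, a = Sum.inl u ∧ b = Sum.inl v ∧ (cycleGraph 4).Adj u v) ∨
        (∃ u, ∃ e : (cycleGraph 4).edgeSet, a = Sum.inl u ∧ b = Sum.inr e ∧
          u ∈ (e : Sym2 (Fin 4)))) →
        G.Adj (Sum.elim (cmap v0 v1 v2 v3) (fun e => gmap b01 b12 b23 b30 e.1) a)
          (Sum.elim (cmap v0 v1 v2 v3) (fun e => gmap b01 b12 b23 b30 e.1) b) := by
      rintro a b (⟨u, w, rfl, rfl, huw⟩ | ⟨u, e, rfl, rfl, hue⟩)
      · simp only [Sum.elim_inl]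
        rcases adj_cases u w huw with ⟨rfl,rfl⟩|⟨rfl,rfl⟩|⟨rfl,rfl⟩|⟨rfl,rfl⟩|⟨rfl,rfl⟩|⟨rfl,rfl⟩|⟨rfl,rfl⟩|⟨rfl,rfl⟩
        · exact h01
        · exact h01.symm
        · exact h12
        · exact h12.symm
        · exact h23
        · exact h23.symm
        · exact h30
        · exact h30.symm
      · simp only [Sum.elim_inl, Sum.elim_inr]
        rcases c4edge' e.1 e.2 with h4 | h4 | h4 | h4 <;> rw [h4] at hue ⊢ <;>
          rw [Sym2.mem_iff] at hue <;>
          [rw [gmap01]; rw [gmap12]; rw [gmap23]; rw [gmap30]] <;>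
          rcases hue with rfl | rfl <;>
          first
            | exact hA01 | exact hB01 | exact hA12 | exact hB12
            | exact hA23 | exact hB23 | exact hA30 | exact hB30
    rcases hab.2 with h | h
    · exact key a b h
    · exact (key b a h).symm
  have hinj : Function.Injective
      (Sum.elim (cmap v0 v1 v2 v3) (fun e : (cycleGraph 4).edgeSet => gmap b01 b12 b23 b30 e.1)) := by
    intro p q h
    match p, q with
    | Sum.inl u, Sum.inl w =>
      simp only [Sum.elim_inl] at h
      exact congrArg _ (cmap_inj n01 n02 n03 n12' n13 n23' h)
    | Sum.inl u, Sum.inr e =>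
      exfalso
      simp only [Sum.elim_inl, Sum.elim_inr] at h
      rcases c4edge' e.1 e.2 with h4 | h4 | h4 | h4 <;> rw [h4] at h <;>
        [rw [gmap01] at h; rw [gmap12] at h; rw [gmap23] at h; rw [gmap30] at h] <;>
        rcases fin4_cases u with rfl | rfl | rfl | rfl <;>
        first
          | exact m00 h | exact m01 h | exact m02 h | exact m03 h
          | exact m10 h | exact m11 h | exact m12 h | exact m13 h
          | exact m20 h | exact m21 h | exact m22 h | exact m23 h
          | exact m30 h | exact m31 h | exact m32 h | exact m33 h
    | Sum.inr e, Sum.inl u =>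
      exfalso
      simp only [Sum.elim_inl, Sum.elim_inr] at h
      rcases c4edge' e.1 e.2 with h4 | h4 | h4 | h4 <;> rw [h4] at h <;>
        [rw [gmap01] at h; rw [gmap12] at h; rw [gmap23] at h; rw [gmap30] at h] <;>
        rcases fin4_cases u with rfl | rfl | rfl | rfl <;>
        first
          | exact m00 h.symm | exact m01 h.symm | exact m02 h.symm | exact m03 h.symm
          | exact m10 h.symm | exact m11 h.symm | exact m12 h.symm | exact m13 h.symm
          | exact m20 h.symm | exact m21 h.symm | exact m22 h.symm | exact m23 h.symm
          | exact m30 h.symm | exact m31 h.symm | exact m32 h.symm | exact m33 h.symm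
    | Sum.inr e, Sum.inr e' =>
      simp only [Sum.elim_inr] at h
      have : (e : Sym2 (Fin 4)) = e' := by
        rcases c4edge' e.1 e.2 with h4 | h4 | h4 | h4 <;>
          rcases c4edge' e'.1 e'.2 with h5 | h5 | h5 | h5 <;>
          rw [h4, h5] at h ⊢ <;>
          simp only [gmap01, gmap12, gmap23, gmap30] at h <;>
          first
            | rfl
            | exact absurd h p01 | exact absurd h p02 | exact absurd h p03
            | exact absurd h p12 | exact absurd h p13 | exact absurd h p23
            | exact absurd h.symm p01 | exact absurd h.symm p02 | exact absurd h.symm p03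
            | exact absurd h.symm p12 | exact absurd h.symm p13 | exact absurd h.symm p23
      exact congrArg _ (Subtype.ext this)
  exact ⟨⟨_, fun {a b} => hmap a b⟩, hinj⟩

lemma card_le_six {α : Type*} [DecidableEq α] (a b c d e f : α) :
    ({a,b,c,d,e,f} : Finset α).card ≤ 6 := by
  refine (Finset.card_insert_le _ _).trans (Nat.succ_le_succ ?_)
  refine (Finset.card_insert_le _ _).trans (Nat.succ_le_succ ?_)
  refine (Finset.card_insert_le _ _).trans (Nat.succ_le_succ ?_)
  refine (Finset.card_insert_le _ _).trans (Nat.succ_le_succ ?_)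
  refine (Finset.card_insert_le _ _).trans (Nat.succ_le_succ ?_)
  simp

set_option maxHeartbeats 2000000 in
/-- There exist `δ₀ > 0` and `n₀` such that for all `0 < δ ≤ δ₀` and `n ≥ n₀`,
under the Setup, every `v ∈ V'` satisfies
`min{|N_G(v) ∩ D₁|, |N_G(v) ∩ D₂|} ≤ √(3δ)·n`. -/
theorem stmt13 : ∃ δ0 : ℝ, 0 < δ0 ∧ ∃ n0 : ℕ,
    ∀ δ : ℝ, 0 < δ → δ ≤ δ0 → ∀ n : ℕ, n0 ≤ n →
    ∀ G : SimpleGraph (Fin n), _root_.Free C4expansion G →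
    (∀ u v : Fin n, G.Adj u v → ∃ w : Fin n, G.Adj u w ∧ G.Adj v w) →
    ∀ (x : Fin n) (V1 V2 : Set (Fin n)),
    Disjoint V1 V2 → V1 ∪ V2 = {x}ᶜ →
    (∀ W1 W2 : Set (Fin n), Disjoint W1 W2 → W1 ∪ W2 = {x}ᶜ →
      crossEdges G W1 W2 ≤ crossEdges G V1 V2) →
    ((n : ℝ) ^ 2 / 4 - 2 * δ * (n : ℝ) ^ 2 ≤ (crossEdges G V1 V2 : ℝ)) →
    ∀ D : Set (Fin n),
    D = {v : Fin n | v ≠ x ∧ G.Adj v x ∧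
      (n : ℝ) / 200 ≤ (edgeTriangleDeg G v x : ℝ)} →
    ∀ D1 D2 : Set (Fin n), D1 = D ∩ V1 → D2 = D ∩ V2 →
    ∀ v : Fin n, v ≠ x →
      min (((G.neighborSet v ∩ D1).ncard : ℝ)) (((G.neighborSet v ∩ D2).ncard : ℝ))
        ≤ Real.sqrt (3 * δ) * (n : ℝ) := by
  classical
  refine ⟨1, one_pos, 20000, ?_⟩
  intro δ hδ hδ1 n hn G hFree hTri x V1 V2 hdisj hunion _hmax hcut D hD D1 D2 hD1 hD2 v hvx
  by_contra hcon
  rw [not_le, lt_min_iff] at hcon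
  obtain ⟨hA0, hB0⟩ := hcon
  set s : ℝ := Real.sqrt (3 * δ) * n with hs
  have hnR : (20000 : ℝ) ≤ (n : ℝ) := by exact_mod_cast Nat.cast_le.mpr hn
  have hnpos : (0 : ℝ) < n := by linarith
  have hs0 : 0 ≤ s := mul_nonneg (Real.sqrt_nonneg _) (le_of_lt hnpos)
  have hs2 : s ^ 2 = 3 * δ * (n : ℝ) ^ 2 := by
    rw [hs, mul_pow, Real.sq_sqrt (by positivity)]
  -- finsets
  set A : Finset (Fin n) := (G.neighborSet v ∩ D1).toFinset with hA
  set B : Finset (Fin n) := (G.neighborSet v ∩ D2).toFinset with hB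
  have hAcard : ((G.neighborSet v ∩ D1).ncard : ℝ) = (A.card : ℝ) := by
    rw [hA, Set.ncard_eq_toFinset_card']
  have hBcard : ((G.neighborSet v ∩ D2).ncard : ℝ) = (B.card : ℝ) := by
    rw [hB, Set.ncard_eq_toFinset_card']
  rw [hAcard] at hA0
  rw [hBcard] at hB0
  set V1' : Finset (Fin n) := V1.toFinset with hV1'
  set V2' : Finset (Fin n) := V2.toFinset with hV2'
  have hAsub : A ⊆ V1' := by
    intro d hd
    rw [hA, Set.mem_toFinset] at hd
    rw [hV1', Set.mem_toFinset]
    have := hd.2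
    rw [hD1] at this
    exact this.2
  have hBsub : B ⊆ V2' := by
    intro d hd
    rw [hB, Set.mem_toFinset] at hd
    rw [hV2', Set.mem_toFinset]
    have := hd.2
    rw [hD2] at this
    exact this.2
  clear_value A B
  -- cut as finset
  set C : Finset (Fin n × Fin n) :=
    (V1' ×ˢ V2').filter (fun p => G.Adj p.1 p.2) with hC
  have hcrossC : (crossEdges G V1 V2 : ℝ) = (C.card : ℝ) := by
    have hset : {p : Fin n × Fin n | p.1 ∈ V1 ∧ p.2 ∈ V2 ∧ G.Adj p.1 p.2} = ↑C := by
      ext p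
      simp [hC, Finset.mem_filter, Finset.mem_product, hV1', hV2', Set.mem_toFinset,
        and_assoc]
    rw [crossEdges, hset, Set.ncard_coe_finset]
  set Pbad : Finset (Fin n × Fin n) := (V1' ×ˢ V2').filter (fun p => ¬ G.Adj p.1 p.2)
    with hPbad
  -- total pairs
  have hsum : C.card + Pbad.card = V1'.card * V2'.card := by
    rw [hC, hPbad, Finset.card_filter_add_card_filter_not, Finset.card_product]
  -- V1'.card + V2'.card = n - 1
  have hpq : V1'.card + V2'.card = n - 1 := by
    have h1 : V1.ncard + V2.ncard = ({x}ᶜ : Set (Fin n)).ncard := by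
      rw [← Set.ncard_union_eq hdisj (Set.toFinite _) (Set.toFinite _), hunion]
    have h2 : ({x}ᶜ : Set (Fin n)).ncard = n - 1 := by
      rw [Set.ncard_eq_toFinset_card']
      simp [Finset.card_compl]
    have h3 : V1.ncard = V1'.card := by rw [hV1', Set.ncard_eq_toFinset_card']
    have h4 : V2.ncard = V2'.card := by rw [hV2', Set.ncard_eq_toFinset_card']
    omega
  have hpqR : (V1'.card : ℝ) + (V2'.card : ℝ) = (n : ℝ) - 1 := by
    have h1 : 1 ≤ n := by omega
    have h2 := congrArg (Nat.cast : ℕ → ℝ) hpq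
    push_cast [Nat.cast_sub h1] at h2
    linarith
  have hpqle : (V1'.card : ℝ) * (V2'.card : ℝ) ≤ ((n : ℝ) - 1) ^ 2 / 4 := by
    nlinarith [sq_nonneg ((V1'.card : ℝ) - (V2'.card : ℝ))]
  have hCle : (C.card : ℝ) ≤ (V1'.card : ℝ) * (V2'.card : ℝ) := by
    have : C.card ≤ (V1' ×ˢ V2').card := Finset.card_le_card (Finset.filter_subset _ _)
    rw [Finset.card_product] at this
    exact_mod_cast this
  clear_value C Pbad
  -- delta lower bound
  have hdn : (n : ℝ) / 4 ≤ 2 * δ * (n : ℝ) ^ 2 := by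
    have h1 : (n:ℝ)^2/4 - 2*δ*(n:ℝ)^2 ≤ ((n:ℝ)-1)^2/4 := by
      calc (n:ℝ)^2/4 - 2*δ*(n:ℝ)^2 ≤ (C.card : ℝ) := by rw [← hcrossC]; exact hcut
        _ ≤ _ := hCle.trans hpqle
    nlinarith
  have hs6 : 6 ≤ s := by
    have hs2' : s ^ 2 ≥ 3 * (n : ℝ) / 8 := by linarith
    have h36 : (6:ℝ) ^ 2 ≤ s ^ 2 := by norm_num; linarith
    exact le_of_pow_le_pow_left₀ (by norm_num) hs0 h36
  -- bad pairs
  have hPbadle : (Pbad.card : ℝ) ≤ 2 * δ * (n : ℝ) ^ 2 := by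
    have h1 : (Pbad.card : ℝ) = (V1'.card : ℝ) * (V2'.card : ℝ) - (C.card : ℝ) := by
      have h2 := congrArg (Nat.cast : ℕ → ℝ) hsum
      push_cast at h2
      linarith
    have h2 : (n:ℝ)^2/4 - 2*δ*(n:ℝ)^2 ≤ (C.card : ℝ) := by rw [← hcrossC]; exact hcut
    linarith
  -- pairs within A × B
  set E : Finset (Fin n × Fin n) := (A ×ˢ B).filter (fun p => G.Adj p.1 p.2) with hE
  set P : Finset (Fin n × Fin n) := (A ×ˢ B).filter (fun p => ¬ G.Adj p.1 p.2) with hP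
  have hEP : E.card + P.card = A.card * B.card := by
    rw [hE, hP, Finset.card_filter_add_card_filter_not, Finset.card_product]
  clear_value E P
  have hPsub : P ⊆ Pbad := by
    intro p hp
    rw [hP, Finset.mem_filter, Finset.mem_product] at hp
    rw [hPbad, Finset.mem_filter, Finset.mem_product]
    exact ⟨⟨hAsub hp.1.1, hBsub hp.1.2⟩, hp.2⟩
  have hPle : (P.card : ℝ) ≤ 2 * δ * (n : ℝ) ^ 2 :=
    le_trans (by exact_mod_cast Finset.card_le_card hPsub) hPbadle
  have hEcard : (E.card : ℝ) = (A.card : ℝ) * (B.card : ℝ) - (P.card : ℝ) := by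
    have h2 := congrArg (Nat.cast : ℕ → ℝ) hEP
    push_cast at h2
    linarith
  have hab : s ^ 2 < (A.card : ℝ) * (B.card : ℝ) := by nlinarith
  have hEbig : (A.card : ℝ) * (B.card : ℝ) / 3 < (E.card : ℝ) := by nlinarith
  -- find a 2-matching in E
  have hmatch : ∃ p ∈ E, ∃ q ∈ E, p.1 ≠ q.1 ∧ p.2 ≠ q.2 := by
    by_contra hcon2
    push_neg at hcon2
    have hEpos : (0:ℝ) < (E.card : ℝ) := by nlinarith
    have hEne : E.Nonempty := Finset.card_pos.mp (by exact_mod_cast hEpos)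
    obtain ⟨p0, hp0⟩ := hEne
    have hsub2 : E ⊆ ({p0.1} ×ˢ B) ∪ (A ×ˢ {p0.2}) := by
      intro q hq
      have hq' := hq
      rw [hE, Finset.mem_filter, Finset.mem_product] at hq'
      rcases eq_or_ne q.1 p0.1 with h1 | h1
      · rw [Finset.mem_union]
        left
        rw [Finset.mem_product, Finset.mem_singleton]
        exact ⟨h1, hq'.1.2⟩
      · have h2 : q.2 = p0.2 := hcon2 q hq p0 hp0 h1
        rw [Finset.mem_union]
        right
        rw [Finset.mem_product, Finset.mem_singleton]
        exact ⟨hq'.1.1, h2⟩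
    have hle : E.card ≤ B.card + A.card := by
      calc E.card ≤ (({p0.1} ×ˢ B) ∪ (A ×ˢ {p0.2})).card := Finset.card_le_card hsub2
        _ ≤ ({p0.1} ×ˢ B).card + (A ×ˢ {p0.2}).card := Finset.card_union_le _ _
        _ = B.card + A.card := by simp [Finset.card_product]
    have hleR : (E.card : ℝ) ≤ (B.card : ℝ) + (A.card : ℝ) := by exact_mod_cast hle
    nlinarith
  obtain ⟨p1, hp1, p2, hp2, hne1, hne2⟩ := hmatch
  -- unpack
  rw [hE, Finset.mem_filter, Finset.mem_product] at hp1 hp2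
  obtain ⟨⟨hp1A, hp1B⟩, hp1adj⟩ := hp1
  obtain ⟨⟨hp2A, hp2B⟩, hp2adj⟩ := hp2
  set d1 := p1.1
  set d2 := p1.2
  set d1' := p2.1
  set d2' := p2.2
  rw [hA, Set.mem_toFinset, Set.mem_inter_iff, mem_neighborSet, hD1] at hp1A hp2A
  rw [hB, Set.mem_toFinset, Set.mem_inter_iff, mem_neighborSet, hD2] at hp1B hp2B
  have hvd1 := hp1A.1
  have hd1D := hp1A.2.1
  have hd1V1 := hp1A.2.2
  have hvd1' := hp2A.1
  have hd1'D := hp2A.2.1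
  have hd1'V1 := hp2A.2.2
  have hvd2 := hp1B.1
  have hd2D := hp1B.2.1
  have hd2V2 := hp1B.2.2
  have hvd2' := hp2B.1
  have hd2'D := hp2B.2.1
  have hd2'V2 := hp2B.2.2
  rw [hD, Set.mem_setOf_eq] at hd1D hd1'D hd2D hd2'D
  obtain ⟨hd1x, hd1adjx, hd1deg⟩ := hd1D
  obtain ⟨hd1'x, hd1'adjx, hd1'deg⟩ := hd1'D
  obtain ⟨hd2x, hd2adjx, _⟩ := hd2D
  obtain ⟨hd2'x, hd2'adjx, _⟩ := hd2'D
  -- the two apex candidate sets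
  set W1 : Finset (Fin n) := {w : Fin n | G.Adj d1 w ∧ G.Adj x w}.toFinset with hW1
  set W2 : Finset (Fin n) := {w : Fin n | G.Adj d1' w ∧ G.Adj x w}.toFinset with hW2
  have hW1card : (8 : ℕ) ≤ W1.card := by
    have h1 : ((edgeTriangleDeg G d1 x : ℕ) : ℝ) = (W1.card : ℝ) := by
      rw [edgeTriangleDeg, Set.ncard_eq_toFinset_card']
    have h2 : (8 : ℝ) ≤ (W1.card : ℝ) := by
      rw [← h1]
      calc (8:ℝ) ≤ (n : ℝ)/200 := by linarith
        _ ≤ _ := hd1deg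
    exact_mod_cast h2
  have hW2card : (8 : ℕ) ≤ W2.card := by
    have h1 : ((edgeTriangleDeg G d1' x : ℕ) : ℝ) = (W2.card : ℝ) := by
      rw [edgeTriangleDeg, Set.ncard_eq_toFinset_card']
    have h2 : (8 : ℝ) ≤ (W2.card : ℝ) := by
      rw [← h1]
      calc (8:ℝ) ≤ (n : ℝ)/200 := by linarith
        _ ≤ _ := hd1'deg
    exact_mod_cast h2
  -- choose w1
  clear_value W1 W2
  set S1 : Finset (Fin n) := {v, d1, x, d1', d2, d2'} with hS1
  have hw1ex : (W1 \ S1).Nonempty := by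
    rw [← Finset.card_pos]
    have h1 := Finset.le_card_sdiff S1 W1
    have h2 : S1.card ≤ 6 := by rw [hS1]; exact card_le_six v d1 x d1' d2 d2'
    omega
  obtain ⟨w1, hw1⟩ := hw1ex
  rw [Finset.mem_sdiff] at hw1
  obtain ⟨hw1W, hw1S⟩ := hw1
  rw [hW1, Set.mem_toFinset, Set.mem_setOf_eq] at hw1W
  have hw1ne : w1 ≠ v ∧ w1 ≠ d1 ∧ w1 ≠ x ∧ w1 ≠ d1' ∧ w1 ≠ d2 ∧ w1 ≠ d2' := by
    rw [hS1] at hw1S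
    simp only [Finset.mem_insert, Finset.mem_singleton] at hw1S
    push_neg at hw1S
    exact hw1S
  -- choose w2
  have hw2ex : (W2 \ insert w1 S1).Nonempty := by
    rw [← Finset.card_pos]
    have h1 := Finset.le_card_sdiff (insert w1 S1) W2
    have h2 : S1.card ≤ 6 := by rw [hS1]; exact card_le_six v d1 x d1' d2 d2'
    have h3 := Finset.card_insert_le w1 S1
    omega
  obtain ⟨w2, hw2⟩ := hw2ex
  rw [Finset.mem_sdiff] at hw2
  obtain ⟨hw2W, hw2S⟩ := hw2
  rw [hW2, Set.mem_toFinset, Set.mem_setOf_eq] at hw2W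
  have hw2ne : w2 ≠ w1 ∧ w2 ≠ v ∧ w2 ≠ d1 ∧ w2 ≠ x ∧ w2 ≠ d1' ∧ w2 ≠ d2 ∧ w2 ≠ d2' := by
    rw [hS1] at hw2S
    simp only [Finset.mem_insert, Finset.mem_singleton] at hw2S
    push_neg at hw2S
    exact hw2S
  -- disjointness of V1 V2 gives cross distinctness
  have hd1d2' : d1 ≠ d2' := fun h => (Set.disjoint_left.mp hdisj hd1V1) (h ▸ hd2'V2)
  have hd1'd2 : d1' ≠ d2 := fun h => (Set.disjoint_left.mp hdisj hd1'V1) (h ▸ hd2V2)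
  -- build the configuration: cycle v - d1 - x - d1' with apexes d2, w1, w2, d2'
  exact hFree (contains_config
    hvd1 hd1adjx hd1'adjx.symm hvd1'.symm
    hvd2 hp1adj
    hw1W.1 hw1W.2
    hw2W.2 hw2W.1
    hp2adj hvd2'
    hvx hne1
    hvd2.ne (Ne.symm hw1ne.1) (Ne.symm hw2ne.2.1) hvd2'.ne
    hp1adj.ne (Ne.symm hw1ne.2.1) (Ne.symm hw2ne.2.2.1) hd1d2'
    (Ne.symm hd2x) (Ne.symm hw1ne.2.2.1) (Ne.symm hw2ne.2.2.2.1) (Ne.symm hd2'x)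
    hd1'd2 (Ne.symm hw1ne.2.2.2.1) (Ne.symm hw2ne.2.2.2.2.1) hp2adj.ne
    (Ne.symm hw1ne.2.2.2.2.1) (Ne.symm hw2ne.2.2.2.2.2.1) hne2
    (Ne.symm hw2ne.1) hw1ne.2.2.2.2.2 hw2ne.2.2.2.2.2.2)
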